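/- Edelman's labeling is an EL-labeling of the symmetric group S_n under Bruhat order: label the cover where y is obtained from x = (a_1,...,a_n) by swapping a_i < a_j (i < j, with ℓ(y) = ℓ(x)+1) by the pair (a_i, a_j); then every interval of S_n has a unique increasing maximal chain, which is lexicographically first. -/

import Mathlib

open Finset

variable {n : ℕ}

/-- An element of the rook monoid `R_n` in one-line notation: a sequence of
entries in `{0,...,n}` whose nonzero entries are pairwise distinct. -/
def IsRook (n : ℕ) (a : Fin n → ℕ) : Prop :=
  (∀ i, a i ≤ n) ∧ ∀ i j, a i ≠ 0 → a i = a j → i = j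

/-- number of inversions -/
def rinv (a : Fin n → ℕ) : ℕ :=
  ((univ ×ˢ univ).filter fun p : Fin n × Fin n => p.1 < p.2 ∧ a p.2 < a p.1).card

/-- number of coinversion pairs -/
def rcoinv (a : Fin n → ℕ) : ℕ :=
  ((univ ×ˢ univ).filter fun p : Fin n × Fin n => p.1 < p.2 ∧ 0 < a p.1 ∧ a p.1 < a p.2).card

/-- the length function ℓ -/
def rlen (a : Fin n → ℕ) : ℕ := (∑ i, a i) + rinv a

/-- type 1 generating relation: increase a single entry -/
def Step1 (a b : Fin n → ℕ) : Prop := ∃ i, a i < b i ∧ ∀ j, j ≠ i → a j = b j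

/-- type 2 generating relation: swap two entries, larger one first -/
def Step2 (a b : Fin n → ℕ) : Prop :=
  ∃ i j, i < j ∧ a i < a j ∧ b i = a j ∧ b j = a i ∧ ∀ k, k ≠ i → k ≠ j → a k = b k

/-- the Bruhat-Chevalley-Renner order on `R_n` -/
def RookLe (n : ℕ) (a b : Fin n → ℕ) : Prop :=
  Relation.ReflTransGen (fun x y => IsRook n x ∧ IsRook n y ∧ (Step1 x y ∨ Step2 x y)) a b

def RookLt (n : ℕ) (a b : Fin n → ℕ) : Prop := RookLe n a b ∧ a ≠ b

/-- covering relation of the Bruhat-Chevalley-Renner order -/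
def RookCov (n : ℕ) (a b : Fin n → ℕ) : Prop :=
  RookLt n a b ∧ ∀ z, RookLt n a z → RookLt n z b → False

/-- the edge labeling `F` on covering relations -/
noncomputable def Flabel (a b : Fin n → ℕ) : ℕ × ℕ := by
  classical
  exact if h : ∃ i, a i < b i ∧ ∀ j, j ≠ i → a j = b j then (a h.choose, b h.choose)
  else if h2 : ∃ p : Fin n × Fin n, p.1 < p.2 ∧ a p.1 < a p.2 ∧ b p.1 = a p.2 ∧ b p.2 = a p.1 ∧
      ∀ k, k ≠ p.1 → k ≠ p.2 → a k = b k then (a h2.choose.1, a h2.choose.2)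
  else (0, 0)

/-- lexicographic (strict) order on labels -/
def pairLt (p q : ℕ × ℕ) : Prop := p.1 < q.1 ∨ (p.1 = q.1 ∧ p.2 < q.2)

def pairLe (p q : ℕ × ℕ) : Prop := p = q ∨ pairLt p q

/-- lexicographic comparison of label sequences -/
def lexLe (l m : List (ℕ × ℕ)) : Prop := l = m ∨ List.Lex pairLt l m

/-- the Jordan-Hölder sequence of labels of a chain -/
noncomputable def labels (c : List (Fin n → ℕ)) : List (ℕ × ℕ) :=
  List.zipWith Flabel c c.tail

/-- a maximal chain in the interval `[x,y]` -/
def RookMaxChain (n : ℕ) (x y : Fin n → ℕ) (c : List (Fin n → ℕ)) : Prop :=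
  c.Chain' (RookCov n) ∧ c.head? = some x ∧ c.getLast? = some y

/-- a permutation of `{1,...,n}` in one-line notation -/
def IsPerm (n : ℕ) (a : Fin n → ℕ) : Prop :=
  (∀ i, 1 ≤ a i ∧ a i ≤ n) ∧ Function.Injective a

/-- the strong Bruhat order on `S_n` -/
def BruhatLe (n : ℕ) (a b : Fin n → ℕ) : Prop :=
  Relation.ReflTransGen (fun x y => IsPerm n x ∧ IsPerm n y ∧ Step2 x y) a b

def BruhatLt (n : ℕ) (a b : Fin n → ℕ) : Prop := BruhatLe n a b ∧ a ≠ b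

def BruhatCov (n : ℕ) (a b : Fin n → ℕ) : Prop :=
  BruhatLt n a b ∧ ∀ z, BruhatLt n a z → BruhatLt n z b → False

def IsBruhatMaxChain (n : ℕ) (x y : Fin n → ℕ) (c : List (Fin n → ℕ)) : Prop :=
  c.Chain' (BruhatCov n) ∧ c.head? = some x ∧ c.getLast? = some y

namespace Edelman

open Finset

variable {n : ℕ}

/-! ### pair order basics -/

lemma pairLt_trans {p q r : ℕ × ℕ} (h1 : pairLt p q) (h2 : pairLt q r) : pairLt p r := by
  rcases p with ⟨a,b⟩; rcases q with ⟨c,d⟩; rcases r with ⟨e,f⟩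
  simp only [pairLt] at *; omega

lemma pairLe_trans {p q r : ℕ × ℕ} (h1 : pairLe p q) (h2 : pairLe q r) : pairLe p r := by
  rcases h1 with rfl | h1
  · exact h2
  · rcases h2 with rfl | h2
    · exact Or.inr h1
    · exact Or.inr (pairLt_trans h1 h2)

lemma pairLt_irrefl (p : ℕ × ℕ) : ¬ pairLt p p := by
  rcases p with ⟨a,b⟩; simp [pairLt]

lemma pairLe_of_not_lt {p q : ℕ × ℕ} (h : ¬ pairLt q p) : pairLe p q := by
  rcases p with ⟨a,b⟩; rcases q with ⟨c,d⟩
  simp only [pairLt, pairLe, Prod.mk.injEq] at *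
  omega

lemma pairLe_lt_trans {p q r : ℕ × ℕ} (h1 : pairLe p q) (h2 : pairLt q r) : pairLt p r := by
  rcases h1 with rfl | h1
  · exact h2
  · exact pairLt_trans h1 h2

lemma not_pairLe_of_lt {p q : ℕ × ℕ} (h : pairLt p q) : ¬ pairLe q p := by
  rintro (rfl | h2)
  · exact pairLt_irrefl _ h
  · exact pairLt_irrefl _ (pairLt_trans h h2)

/-! ### swap -/

def sw (u : Fin n → ℕ) (i j : Fin n) : Fin n → ℕ :=
  fun p => if p = i then u j else if p = j then u i else u p

lemma sw_left (u : Fin n → ℕ) (i j : Fin n) : sw u i j i = u j := by simp [sw]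

lemma sw_right (u : Fin n → ℕ) {i j : Fin n} (hij : i ≠ j) : sw u i j j = u i := by
  simp [sw, hij.symm]

lemma sw_other (u : Fin n → ℕ) {i j p : Fin n} (hpi : p ≠ i) (hpj : p ≠ j) :
    sw u i j p = u p := by simp [sw, hpi, hpj]

lemma sw_eq_comp (u : Fin n → ℕ) (i j : Fin n) :
    sw u i j = u ∘ (Equiv.swap i j) := by
  funext p
  simp only [sw, Function.comp_apply, Equiv.swap_apply_def]
  split_ifs <;> rfl

lemma isPerm_sw {u : Fin n → ℕ} (hu : IsPerm n u) (i j : Fin n) : IsPerm n (sw u i j) := by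
  rw [sw_eq_comp]
  exact ⟨fun p => (hu.1 _), hu.2.comp (Equiv.swap i j).injective⟩

lemma step2_sw {u : Fin n → ℕ} {i j : Fin n} (hij : i < j) (hv : u i < u j) :
    Step2 u (sw u i j) := by
  refine ⟨i, j, hij, hv, sw_left u i j, sw_right u hij.ne, fun k hki hkj => ?_⟩
  exact (sw_other u hki hkj).symm

lemma step2_rep {u v : Fin n → ℕ} (h : Step2 u v) :
    ∃ i j, i < j ∧ u i < u j ∧ v = sw u i j := by
  obtain ⟨i, j, hij, hv, h1, h2, h3⟩ := h
  refine ⟨i, j, hij, hv, ?_⟩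
  funext p
  by_cases hpi : p = i
  · subst hpi; rw [sw_left, h1]
  · by_cases hpj : p = j
    · subst hpj; rw [sw_right u hij.ne, h2]
    · rw [sw_other u hpi hpj, h3 p hpi hpj]

/-! ### counting -/

def dcnt (u : Fin n → ℕ) (k t : ℕ) : ℕ :=
  ((univ : Finset (Fin n)).filter fun p => p.val < k ∧ t ≤ u p).card

lemma dcnt_sw {u : Fin n → ℕ} {i j : Fin n} (hij : i < j) (hv : u i < u j) (k t : ℕ) :
    dcnt (sw u i j) k t
      = dcnt u k t + if i.val < k ∧ k ≤ j.val ∧ u i < t ∧ t ≤ u j then 1 else 0 := by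
  classical
  have hne : i ≠ j := hij.ne
  have hne' : j ≠ i := hij.ne'
  unfold dcnt
  rw [Finset.card_filter, Finset.card_filter]
  have hi : i ∈ (univ : Finset (Fin n)) := mem_univ i
  have hj : j ∈ (univ : Finset (Fin n)).erase i := by
    simp [hne']
  rw [← Finset.add_sum_erase _ _ hi, ← Finset.add_sum_erase _ _ hj,
      ← Finset.add_sum_erase _ (fun p => if p.val < k ∧ t ≤ u p then 1 else 0) hi,
      ← Finset.add_sum_erase _ (fun p => if p.val < k ∧ t ≤ u p then 1 else 0) hj]
  have hsum : ∑ p ∈ (((univ : Finset (Fin n)).erase i).erase j),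
      (if p.val < k ∧ t ≤ sw u i j p then 1 else 0)
      = ∑ p ∈ (((univ : Finset (Fin n)).erase i).erase j),
      (if p.val < k ∧ t ≤ u p then 1 else 0) := by
    refine Finset.sum_congr rfl fun p hp => ?_
    have hpj : p ≠ j := (Finset.mem_erase.1 hp).1
    have hpi : p ≠ i := (Finset.mem_erase.1 (Finset.mem_erase.1 hp).2).1
    rw [sw_other u hpi hpj]
  rw [hsum, sw_left, sw_right u hne]
  have hvij : i.val < j.val := hij
  split_ifs <;> omega

lemma dcnt_le_of_sw {u : Fin n → ℕ} {i j : Fin n} (hij : i < j) (hv : u i < u j) (k t : ℕ) :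
    dcnt u k t ≤ dcnt (sw u i j) k t := by
  rw [dcnt_sw hij hv]; split_ifs <;> omega


open Finset

variable {n : ℕ}

/-- generic splitting of a window count at an inner position -/
lemma cnt_split (P : Fin n → Prop) [DecidablePred P] (i : Fin n) (k : ℕ) (hk : i.val < k) :
    ((univ : Finset (Fin n)).filter fun p => p.val < k ∧ P p).card
      = ((univ : Finset (Fin n)).filter fun p => p.val < i.val ∧ P p).card
        + ((if P i then 1 else 0)
        + ((univ : Finset (Fin n)).filter fun p => i.val < p.val ∧ p.val < k ∧ P p).card) := by
  classical
  rw [Finset.card_filter, Finset.card_filter, Finset.card_filter]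
  have h2 : (if P i then 1 else 0)
      = ∑ p ∈ (univ : Finset (Fin n)), (if p = i then (if P p then 1 else 0) else 0) := by
    rw [Finset.sum_ite_eq' univ i (fun p => if P p then 1 else 0)]
    simp
  rw [h2, ← Finset.sum_add_distrib, ← Finset.sum_add_distrib]
  refine Finset.sum_congr rfl fun p _ => ?_
  by_cases hpi : p = i
  · subst hpi
    by_cases hP : P p <;> simp [hP, hk, lt_irrefl]
  · have hv : p.val ≠ i.val := fun h => hpi (Fin.ext h)
    by_cases hP : P p
    · simp only [hP, and_true, if_pos, hpi, if_false]
      split_ifs <;> omega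
    · simp [hP, hpi]

lemma cnt_prefix_congr (P Q : Fin n → Prop) [DecidablePred P] [DecidablePred Q] (a : ℕ)
    (h : ∀ p : Fin n, p.val < a → (P p ↔ Q p)) :
    ((univ : Finset (Fin n)).filter fun p => p.val < a ∧ P p).card
      = ((univ : Finset (Fin n)).filter fun p => p.val < a ∧ Q p).card := by
  congr 1
  apply Finset.filter_congr
  intro p _
  constructor
  · rintro ⟨h1, h2⟩; exact ⟨h1, (h p h1).1 h2⟩
  · rintro ⟨h1, h2⟩; exact ⟨h1, (h p h1).2 h2⟩

lemma cnt_mid_congr (P Q : Fin n → Prop) [DecidablePred P] [DecidablePred Q] (a k : ℕ)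
    (h : ∀ p : Fin n, a < p.val → p.val < k → (P p ↔ Q p)) :
    ((univ : Finset (Fin n)).filter fun p => a < p.val ∧ p.val < k ∧ P p).card
      = ((univ : Finset (Fin n)).filter fun p => a < p.val ∧ p.val < k ∧ Q p).card := by
  congr 1
  apply Finset.filter_congr
  intro p _
  constructor
  · rintro ⟨h1, h2, h3⟩; exact ⟨h1, h2, (h p h1 h2).1 h3⟩
  · rintro ⟨h1, h2, h3⟩; exact ⟨h1, h2, (h p h1 h2).2 h3⟩

lemma cnt_mid_mono (P Q : Fin n → Prop) [DecidablePred P] [DecidablePred Q] (a k : ℕ)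
    (h : ∀ p : Fin n, P p → Q p) :
    ((univ : Finset (Fin n)).filter fun p => a < p.val ∧ p.val < k ∧ P p).card
      ≤ ((univ : Finset (Fin n)).filter fun p => a < p.val ∧ p.val < k ∧ Q p).card := by
  apply Finset.card_le_card
  intro p hp
  rw [Finset.mem_filter] at hp ⊢
  exact ⟨hp.1, hp.2.1, hp.2.2.1, h p hp.2.2.2⟩

/-- count of positions `< k` with value `< t` -/
def lcnt (u : Fin n → ℕ) (k t : ℕ) : ℕ :=
  ((univ : Finset (Fin n)).filter fun p => p.val < k ∧ u p < t).card

lemma dcnt_add_lcnt (u : Fin n → ℕ) (k t : ℕ) :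
    dcnt u k t + lcnt u k t = ((univ : Finset (Fin n)).filter fun p => p.val < k).card := by
  classical
  unfold dcnt lcnt
  rw [Finset.card_filter, Finset.card_filter, Finset.card_filter, ← Finset.sum_add_distrib]
  refine Finset.sum_congr rfl fun p _ => ?_
  split_ifs <;> omega

/-! ### dominance order -/

def Dom (x y : Fin n → ℕ) : Prop := ∀ k t, dcnt x k t ≤ dcnt y k t

lemma dom_refl (x : Fin n → ℕ) : Dom x x := fun _ _ => le_rfl

lemma dom_trans {x y z : Fin n → ℕ} (h1 : Dom x y) (h2 : Dom y z) : Dom x z :=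
  fun k t => (h1 k t).trans (h2 k t)

lemma dom_of_step2 {x y : Fin n → ℕ} (h : Step2 x y) : Dom x y := by
  obtain ⟨i, j, hij, hv, rfl⟩ := step2_rep h
  exact fun k t => dcnt_le_of_sw hij hv k t

def Mtot (u : Fin n → ℕ) : ℕ :=
  ∑ q ∈ Finset.range (n+1) ×ˢ Finset.range (n+1), dcnt u q.1 q.2

lemma mtot_le_of_dom {x y : Fin n → ℕ} (h : Dom x y) : Mtot x ≤ Mtot y :=
  Finset.sum_le_sum fun q _ => h q.1 q.2

lemma mtot_lt_of_step2 {x y : Fin n → ℕ} (hx : IsPerm n x) (h : Step2 x y) :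
    Mtot x < Mtot y := by
  obtain ⟨i, j, hij, hv, rfl⟩ := step2_rep h
  refine Finset.sum_lt_sum (fun q _ => dcnt_le_of_sw hij hv q.1 q.2) ?_
  refine ⟨(i.val + 1, x j), ?_, ?_⟩
  · simp only [Finset.mem_product, Finset.mem_range]
    exact ⟨by omega, by have := hx.1 j; omega⟩
  · rw [dcnt_sw hij hv]
    have hij' : i.val < j.val := hij
    have : (i.val < i.val + 1 ∧ i.val + 1 ≤ j.val ∧ x i < x j ∧ x j ≤ x j) := by
      refine ⟨by omega, by omega, hv, le_rfl⟩
    rw [if_pos this]; omega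

/-! ### basic facts about BruhatLe -/

lemma isPerm_of_le {x y : Fin n → ℕ} (h : BruhatLe n x y) (hx : IsPerm n x) : IsPerm n y := by
  induction h with
  | refl => exact hx
  | tail _ h2 _ => exact h2.2.1

lemma dom_of_le {x y : Fin n → ℕ} (h : BruhatLe n x y) : Dom x y := by
  induction h with
  | refl => exact dom_refl x
  | tail _ h2 ih => exact dom_trans ih (dom_of_step2 h2.2.2)

lemma mtot_lt_of_bruhatLt {x y : Fin n → ℕ} (h : BruhatLt n x y) : Mtot x < Mtot y := by
  obtain ⟨hle, hne⟩ := h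
  rcases Relation.ReflTransGen.cases_head hle with rfl | ⟨u, ⟨hpx, hpu, hstep⟩, hrest⟩
  · exact absurd rfl hne
  · exact lt_of_lt_of_le (mtot_lt_of_step2 hpx hstep) (mtot_le_of_dom (dom_of_le hrest))

lemma bruhat_antisymm {x y : Fin n → ℕ} (h1 : BruhatLe n x y) (h2 : BruhatLe n y x) : x = y := by
  by_contra hne
  have l1 := mtot_lt_of_bruhatLt ⟨h1, hne⟩
  have l2 := mtot_lt_of_bruhatLt ⟨h2, fun h => hne h.symm⟩
  omega

lemma perm_one_le {x : Fin n → ℕ} (hx : IsPerm n x) (i : Fin n) : 1 ≤ x i := (hx.1 i).1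

lemma perm_le_n {x : Fin n → ℕ} (hx : IsPerm n x) (i : Fin n) : x i ≤ n := (hx.1 i).2

lemma perm_surj {x : Fin n → ℕ} (hx : IsPerm n x) {v : ℕ} (h1 : 1 ≤ v) (h2 : v ≤ n) :
    ∃ q, x q = v := by
  classical
  have hsub : (univ : Finset (Fin n)).image x ⊆ Finset.Icc 1 n := by
    intro a ha
    obtain ⟨p, _, rfl⟩ := Finset.mem_image.1 ha
    exact Finset.mem_Icc.2 ⟨(hx.1 p).1, (hx.1 p).2⟩
  have hcard : (Finset.Icc 1 n).card ≤ ((univ : Finset (Fin n)).image x).card := by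
    rw [Finset.card_image_of_injective _ hx.2, Finset.card_univ, Fintype.card_fin,
        Nat.card_Icc]
    omega
  have := Finset.eq_of_subset_of_card_le hsub hcard
  have hv : v ∈ (univ : Finset (Fin n)).image x := by
    rw [this]; exact Finset.mem_Icc.2 ⟨h1, h2⟩
  obtain ⟨q, _, hq⟩ := Finset.mem_image.1 hv
  exact ⟨q, hq⟩

lemma dcnt_split (u : Fin n → ℕ) (i : Fin n) (k t : ℕ) (hk : i.val < k) :
    dcnt u k t = ((univ : Finset (Fin n)).filter fun p => p.val < i.val ∧ t ≤ u p).card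
      + ((if t ≤ u i then 1 else 0)
      + ((univ : Finset (Fin n)).filter fun p => i.val < p.val ∧ p.val < k ∧ t ≤ u p).card) :=
  cnt_split (fun p => t ≤ u p) i k hk

lemma lcnt_split (u : Fin n → ℕ) (i : Fin n) (k t : ℕ) (hk : i.val < k) :
    lcnt u k t = ((univ : Finset (Fin n)).filter fun p => p.val < i.val ∧ u p < t).card
      + ((if u i < t then 1 else 0)
      + ((univ : Finset (Fin n)).filter fun p => i.val < p.val ∧ p.val < k ∧ u p < t).card) :=
  cnt_split (fun p => u p < t) i k hk

lemma cnt_mid_empty (P : Fin n → Prop) [DecidablePred P] (a : ℕ) :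
    ((univ : Finset (Fin n)).filter fun p => a < p.val ∧ p.val < a + 1 ∧ P p).card = 0 := by
  rw [Finset.card_eq_zero, Finset.filter_eq_empty_iff]
  intro p _
  rintro ⟨h1, h2, _⟩
  omega

/-- The key construction: if `x <_D y` strictly, we may lower `y` by one swap keeping
dominance over `x`. -/
lemma dom_step_down {x y : Fin n → ℕ} (hx : IsPerm n x) (hy : IsPerm n y)
    (hdom : Dom x y) (hne : x ≠ y) :
    ∃ y', IsPerm n y' ∧ Step2 y' y ∧ Dom x y' ∧ Mtot y' < Mtot y := by
  classical
  -- the first position where x and y differ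
  have hSne : ((univ : Finset (Fin n)).filter fun p => x p ≠ y p).Nonempty := by
    obtain ⟨i, hi⟩ := Function.ne_iff.mp hne
    exact ⟨i, Finset.mem_filter.2 ⟨Finset.mem_univ i, hi⟩⟩
  set S := (univ : Finset (Fin n)).filter fun p => x p ≠ y p with hSdef
  set i := S.min' hSne with hidef
  have hidiff : x i ≠ y i := (Finset.mem_filter.1 (S.min'_mem hSne)).2
  have hiprefix : ∀ p : Fin n, p.val < i.val → x p = y p := by
    intro p hp
    by_contra h
    have hpi : i ≤ p := S.min'_le p (Finset.mem_filter.2 ⟨Finset.mem_univ p, h⟩)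
    have : i.val ≤ p.val := hpi
    omega
  -- x i < y i
  have hxiyi : x i < y i := by
    have hd := hdom (i.val + 1) (x i)
    rw [dcnt_split x i _ (x i) (by omega), dcnt_split y i _ (x i) (by omega),
        cnt_mid_empty, cnt_mid_empty,
        cnt_prefix_congr (fun p => x i ≤ x p) (fun p => x i ≤ y p) i.val
          (fun p hp => by simp only [hiprefix p hp])] at hd
    have h1 : (if x i ≤ x i then 1 else 0) = 1 := by simp
    rw [h1] at hd
    rcases Nat.lt_or_ge (x i) (y i) with h | h
    · exact h
    · have h2 : (if x i ≤ y i then 1 else 0) ≤ 1 := by split_ifs <;> omega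
      have h3 : x i ≤ y i := by by_contra hc; simp [hc] at hd
      omega
  -- the first position j > i with x i ≤ y j < y i
  have hGne : ((univ : Finset (Fin n)).filter fun q => i < q ∧ x i ≤ y q ∧ y q < y i).Nonempty := by
    obtain ⟨q, hq⟩ := perm_surj hy (perm_one_le hx i) (perm_le_n hx i)
    have hqi : q ≠ i := by
      intro h; rw [h] at hq; omega
    have hqgt : i < q := by
      rcases lt_or_ge q i with h | h
      · exfalso
        have := hiprefix q h
        have : x q = x i := by omega
        exact hqi (hx.2 this)
      · exact lt_of_le_of_ne h (Ne.symm hqi)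
    exact ⟨q, Finset.mem_filter.2 ⟨Finset.mem_univ q, hqgt, le_of_eq hq.symm, by omega⟩⟩
  set G := (univ : Finset (Fin n)).filter fun q => i < q ∧ x i ≤ y q ∧ y q < y i with hGdef
  set j := G.min' hGne with hjdef
  have hjmem := Finset.mem_filter.1 (G.min'_mem hGne)
  have hij : i < j := hjmem.2.1
  have hyj1 : x i ≤ y j := hjmem.2.2.1
  have hyj2 : y j < y i := hjmem.2.2.2
  have hjmin : ∀ p : Fin n, i.val < p.val → p.val < j.val → ¬(x i ≤ y p ∧ y p < y i) := by
    intro p h1 h2 hcon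
    have hpG : p ∈ G := Finset.mem_filter.2 ⟨Finset.mem_univ p, h1, hcon.1, hcon.2⟩
    have := G.min'_le p hpG
    have : j.val ≤ p.val := this
    omega
  -- the lowered permutation
  refine ⟨sw y i j, isPerm_sw hy i j, ?_, ?_, ?_⟩
  case _ =>
    -- Step2 (sw y i j) y
    have hswv : (sw y i j) i < (sw y i j) j := by
      rw [sw_left, sw_right y hij.ne]; omega
    have hyeq : y = sw (sw y i j) i j := by
      funext p
      by_cases hpi : p = i
      · subst hpi; rw [sw_left, sw_right y hij.ne]
      · by_cases hpj : p = j
        · subst hpj; rw [sw_right _ hij.ne, sw_left]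
        · rw [sw_other _ hpi hpj, sw_other _ hpi hpj]
    have := step2_sw hij hswv
    rwa [← hyeq] at this
  all_goals {
    have hswv : (sw y i j) i < (sw y i j) j := by
      rw [sw_left, sw_right y hij.ne]; omega
    have hyeq : y = sw (sw y i j) i j := by
      funext p
      by_cases hpi : p = i
      · subst hpi; rw [sw_left, sw_right y hij.ne]
      · by_cases hpj : p = j
        · subst hpj; rw [sw_right _ hij.ne, sw_left]
        · rw [sw_other _ hpi hpj, sw_other _ hpi hpj]
    have hstep : Step2 (sw y i j) y := by
      have := step2_sw hij hswv
      rwa [← hyeq] at this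
    have hbump : ∀ k t, dcnt y k t = dcnt (sw y i j) k t
        + if i.val < k ∧ k ≤ j.val ∧ y j < t ∧ t ≤ y i then 1 else 0 := by
      intro k t
      have := dcnt_sw hij hswv k t
      rw [← hyeq] at this
      rw [this, sw_left, sw_right y hij.ne]
    -- the strict dominance inequality on the bump rectangle
    have hstrict : ∀ k t, i.val < k → k ≤ j.val → y j < t → t ≤ y i →
        dcnt x k t < dcnt y k t := by
      intro k t hk1 hk2 ht1 ht2
      rcases Nat.lt_or_ge (dcnt x k t) (dcnt y k t) with h | h
      · exact h
      have heq : dcnt x k t = dcnt y k t := le_antisymm (hdom k t) h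
      exfalso
      have hik : i.val < k := hk1
      -- lcnt equality
      have hl : lcnt x k t = lcnt y k t := by
        have h1 := dcnt_add_lcnt x k t
        have h2 := dcnt_add_lcnt y k t
        omega
      have hxit : x i < t := by omega
      have hpre : ((univ : Finset (Fin n)).filter fun p => p.val < i.val ∧ x p < t).card
          = ((univ : Finset (Fin n)).filter fun p => p.val < i.val ∧ y p < t).card :=
        cnt_prefix_congr _ _ _ (fun p hp => by simp only [hiprefix p hp])
      have hsx := lcnt_split x i k t hik
      have hsy := lcnt_split y i k t hik
      rw [if_pos hxit] at hsx
      rw [if_neg (by omega : ¬ (y i < t))] at hsy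
      -- midL_y(t) = midL_x(t) + 1
      have hEm1 : ((univ : Finset (Fin n)).filter fun p => i.val < p.val ∧ p.val < k ∧ y p < t).card
          = ((univ : Finset (Fin n)).filter fun p => i.val < p.val ∧ p.val < k ∧ x p < t).card + 1 := by
        omega
      -- midL_y(t) = midL_y(x i)
      have hEm2 : ((univ : Finset (Fin n)).filter fun p => i.val < p.val ∧ p.val < k ∧ y p < t).card
          = ((univ : Finset (Fin n)).filter fun p => i.val < p.val ∧ p.val < k ∧ y p < x i).card := by
        apply cnt_mid_congr
        intro p h1 h2
        have hnot := hjmin p h1 (by omega)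
        constructor
        · intro h3
          by_contra h4
          exact hnot ⟨by omega, by omega⟩
        · intro h3; omega
      -- from Dom at (k, x i) : midL_y(x i) ≤ midL_x(x i)
      have hEm3 : ((univ : Finset (Fin n)).filter fun p => i.val < p.val ∧ p.val < k ∧ y p < x i).card
          ≤ ((univ : Finset (Fin n)).filter fun p => i.val < p.val ∧ p.val < k ∧ x p < x i).card := by
        have hd := hdom k (x i)
        have h1 := dcnt_add_lcnt x k (x i)
        have h2 := dcnt_add_lcnt y k (x i)
        have hl2 : lcnt y k (x i) ≤ lcnt x k (x i) := by omega
        have hsx2 := lcnt_split x i k (x i) hik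
        have hsy2 := lcnt_split y i k (x i) hik
        rw [if_neg (by omega : ¬ (x i < x i))] at hsx2
        rw [if_neg (by omega : ¬ (y i < x i))] at hsy2
        have hpre2 : ((univ : Finset (Fin n)).filter fun p => p.val < i.val ∧ x p < x i).card
            = ((univ : Finset (Fin n)).filter fun p => p.val < i.val ∧ y p < x i).card :=
          cnt_prefix_congr _ _ _ (fun p hp => by simp only [hiprefix p hp])
        omega
      -- midL_x(x i) ≤ midL_x(t)
      have hEm4 : ((univ : Finset (Fin n)).filter fun p => i.val < p.val ∧ p.val < k ∧ x p < x i).card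
          ≤ ((univ : Finset (Fin n)).filter fun p => i.val < p.val ∧ p.val < k ∧ x p < t).card := by
        apply cnt_mid_mono
        intro p h
        omega
      omega
    first
    | -- Dom x (sw y i j)
      (intro k t
       have hb := hbump k t
       by_cases hc : i.val < k ∧ k ≤ j.val ∧ y j < t ∧ t ≤ y i
       · have := hstrict k t hc.1 hc.2.1 hc.2.2.1 hc.2.2.2
         rw [if_pos hc] at hb
         omega
       · rw [if_neg hc] at hb
         have := hdom k t
         omega)
    | exact mtot_lt_of_step2 (isPerm_sw hy i j) hstep
  }

/-- dominance implies Bruhat order -/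
lemma le_of_dom {x y : Fin n → ℕ} (hx : IsPerm n x) (hy : IsPerm n y) (hdom : Dom x y) :
    BruhatLe n x y := by
  classical
  obtain ⟨M, hM⟩ : ∃ M, Mtot y ≤ M := ⟨Mtot y, le_rfl⟩
  induction M generalizing y with
  | zero =>
    by_cases hne : x = y
    · exact hne ▸ Relation.ReflTransGen.refl
    · obtain ⟨y', _, _, _, hlt⟩ := dom_step_down hx hy hdom hne
      omega
  | succ M IH =>
    by_cases hne : x = y
    · exact hne ▸ Relation.ReflTransGen.refl
    · obtain ⟨y', hy', hstep, hdom', hlt⟩ := dom_step_down hx hy hdom hne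
      exact (IH hy' hdom' (by omega)).tail ⟨hy', hy, hstep⟩

lemma bruhatLe_single {x z : Fin n → ℕ} (hx : IsPerm n x) (hz : IsPerm n z) (h : Step2 x z) :
    BruhatLe n x z :=
  Relation.ReflTransGen.single ⟨hx, hz, h⟩

lemma bruhatLt_single {x z : Fin n → ℕ} (hx : IsPerm n x) (hz : IsPerm n z) (h : Step2 x z) :
    BruhatLt n x z := by
  refine ⟨bruhatLe_single hx hz h, ?_⟩
  intro he
  have := mtot_lt_of_step2 hx h
  rw [← he] at this
  omega

lemma flabel_sw {x : Fin n → ℕ} (hx : IsPerm n x) {i j : Fin n} (hij : i < j)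
    (hv : x i < x j) : Flabel x (sw x i j) = (x i, x j) := by
  have h1 : ¬ ∃ m, x m < sw x i j m ∧ ∀ p, p ≠ m → x p = sw x i j p := by
    rintro ⟨m, hm1, hm2⟩
    have him : i = m := by
      by_contra h
      have := hm2 i h
      rw [sw_left] at this
      omega
    have hjm : j = m := by
      by_contra h
      have := hm2 j h
      rw [sw_right x hij.ne] at this
      omega
    exact hij.ne (him.trans hjm.symm)
  have h2 : ∃ p : Fin n × Fin n, p.1 < p.2 ∧ x p.1 < x p.2 ∧ sw x i j p.1 = x p.2 ∧
      sw x i j p.2 = x p.1 ∧ ∀ k, k ≠ p.1 → k ≠ p.2 → x k = sw x i j k :=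
    ⟨(i, j), hij, hv, sw_left x i j, sw_right x hij.ne,
      fun k hk1 hk2 => (sw_other x hk1 hk2).symm⟩
  unfold Flabel
  rw [dif_neg h1, dif_pos h2]
  obtain ⟨hP1, hP2, hP3, hP4, hP5⟩ := h2.choose_spec
  set P := h2.choose with hPdef
  have hP1' : P.1 ∈ ({i, j} : Set (Fin n)) := by
    by_contra h
    simp only [Set.mem_insert_iff, Set.mem_singleton_iff, not_or] at h
    rw [sw_other x h.1 h.2] at hP3
    have := hx.2 hP3
    rw [this] at hP2
    omega
  have hP2' : P.2 ∈ ({i, j} : Set (Fin n)) := by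
    by_contra h
    simp only [Set.mem_insert_iff, Set.mem_singleton_iff, not_or] at h
    rw [sw_other x h.1 h.2] at hP4
    have := hx.2 hP4
    rw [this] at hP2
    omega
  have : P.1 = i ∧ P.2 = j := by
    rcases hP1' with h1' | h1' <;> rcases hP2' with h2' | h2'
    · rw [h1', h2'] at hP1; exact absurd hP1 (lt_irrefl i)
    · exact ⟨h1', h2'⟩
    · rw [h1', h2'] at hP1; exact absurd hP1 (asymm hij)
    · rw [h1', h2'] at hP1; exact absurd hP1 (lt_irrefl j)
  rw [this.1, this.2]

/-- structure of a covering relation: it is a swap with no intermediate values -/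
lemma cov_struct {x z : Fin n → ℕ} (h : BruhatCov n x z) :
    IsPerm n x ∧ IsPerm n z ∧ ∃ i j : Fin n, i < j ∧ x i < x j ∧ z = sw x i j ∧
      (∀ k : Fin n, i.val < k.val → k.val < j.val → ¬(x i < x k ∧ x k < x j)) ∧
      Flabel x z = (x i, x j) := by
  obtain ⟨⟨hle, hne⟩, hmin⟩ := h
  rcases Relation.ReflTransGen.cases_head hle with rfl | ⟨u, ⟨hpx, hpu, hstep⟩, hrest⟩
  · exact absurd rfl hne
  have hxu : x ≠ u := by
    intro he
    have := mtot_lt_of_step2 hpx hstep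
    rw [← he] at this
    omega
  have huz : u = z := by
    by_contra hc
    exact hmin u (bruhatLt_single hpx hpu hstep) ⟨hrest, hc⟩
  subst huz
  obtain ⟨i, j, hij, hv, rfl⟩ := step2_rep hstep
  refine ⟨hpx, hpu, i, j, hij, hv, rfl, ?_, flabel_sw hpx hij hv⟩
  intro k hk1 hk2 ⟨hxik, hxkj⟩
  -- build an intermediate element to contradict covering
  have hik : i ≠ k := fun h => by rw [h] at hk1; omega
  have hkj : k ≠ j := fun h => by rw [h] at hk2; omega
  have hkj' : (k : Fin n) < j := hk2
  have hikF : (i : Fin n) < k := hk1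
  set v1 := sw x k j with hv1def
  have hv1k : v1 k = x j := sw_left x k j
  have hv1i : v1 i = x i := sw_other x hik hij.ne
  have hv1j : v1 j = x k := sw_right x hkj
  have hstep1 : Step2 x v1 := step2_sw hkj' hxkj
  have hperm1 : IsPerm n v1 := isPerm_sw hpx k j
  set v2 := sw v1 i k with hv2def
  have hv2lt : v1 i < v1 k := by rw [hv1i, hv1k]; omega
  have hstep2 : Step2 v1 v2 := step2_sw hikF hv2lt
  have hperm2 : IsPerm n v2 := isPerm_sw hperm1 i k
  have hv2i : v2 i = x j := by rw [hv2def, sw_left, hv1k]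
  have hv2k : v2 k = x i := by rw [hv2def, sw_right v1 hikF.ne, hv1i]
  have hv2j : v2 j = x k := by
    rw [hv2def, sw_other v1 (Ne.symm hij.ne) (Ne.symm hkj), hv1j]
  have hv2kj : v2 k < v2 j := by rw [hv2k, hv2j]; omega
  have hfin : sw v2 k j = sw x i j := by
    funext p
    by_cases hpi : p = i
    · subst hpi
      rw [sw_other v2 hik hij.ne, hv2i, sw_left]
    · by_cases hpk : p = k
      · subst hpk
        rw [sw_left, hv2j, sw_other x hpi hkj]
      · by_cases hpj : p = j
        · subst hpj
          rw [sw_right v2 hkj, hv2k, sw_right x hij.ne]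
        · rw [sw_other v2 hpk hpj, hv2def, sw_other v1 hpi hpk, hv1def,
              sw_other x hpk hpj, sw_other x hpi hpj]
  have hstep3 : Step2 v2 (sw x i j) := by
    have := step2_sw hkj' hv2kj
    rwa [hfin] at this
  have hlt1 : BruhatLt n x v2 := by
    refine ⟨(bruhatLe_single hpx hperm1 hstep1).trans
      (bruhatLe_single hperm1 hperm2 hstep2), ?_⟩
    intro he
    have l1 := mtot_lt_of_step2 hpx hstep1
    have l2 := mtot_lt_of_step2 hperm1 hstep2
    rw [← he] at l2
    omega
  have hlt2 : BruhatLt n v2 (sw x i j) := bruhatLt_single hperm2 hpu hstep3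
  exact hmin v2 hlt1 hlt2

/-- converse: a swap with no intermediate values is a covering -/
lemma cover_of_noint {x : Fin n → ℕ} (hx : IsPerm n x) {i j : Fin n} (hij : i < j)
    (hv : x i < x j)
    (hni : ∀ k : Fin n, i.val < k.val → k.val < j.val → ¬(x i < x k ∧ x k < x j)) :
    BruhatCov n x (sw x i j) := by
  have hz : IsPerm n (sw x i j) := isPerm_sw hx i j
  refine ⟨bruhatLt_single hx hz (step2_sw hij hv), ?_⟩
  intro v hv1 hv2
  obtain ⟨hle1, hne1⟩ := hv1
  rcases Relation.ReflTransGen.cases_head hle1 with rfl | ⟨u, ⟨hpx, hpu, hstep⟩, hrest⟩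
  · exact hne1 rfl
  obtain ⟨p, q, hpq, hvpq, rfl⟩ := step2_rep hstep
  have hdom : Dom (sw x p q) (sw x i j) := dom_of_le (hrest.trans hv2.1)
  have hrect : ∀ k t, (p.val < k ∧ k ≤ q.val ∧ x p < t ∧ t ≤ x q) →
      (i.val < k ∧ k ≤ j.val ∧ x i < t ∧ t ≤ x j) := by
    intro k t hA
    have h1 := hdom k t
    rw [dcnt_sw hpq hvpq, dcnt_sw hij hv, if_pos hA] at h1
    by_contra hB
    rw [if_neg hB] at h1
    omega
  have h1 := hrect q.val (x q) ⟨hpq, le_rfl, hvpq, le_rfl⟩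
  have h2 := hrect (p.val + 1) (x p + 1) ⟨by omega, by exact hpq, by omega, by omega⟩
  have hpi : p = i := by
    by_contra hc
    have hvne : x p ≠ x i := fun he => hc (hx.2 he)
    have hxip : x i < x p := by omega
    have hpj : p.val < j.val := by
      have : p.val < q.val := hpq
      omega
    exact hni p (by omega) hpj ⟨hxip, by omega⟩
  have hqj : q = j := by
    by_contra hc
    have hvne : x q ≠ x j := fun he => hc (hx.2 he)
    have hqjv : q.val ≠ j.val := fun he => hc (Fin.ext he)
    exact hni q (by omega) (by omega) ⟨by omega, by omega⟩
  subst hpi; subst hqj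
  exact hv2.2 (bruhat_antisymm hv2.1 hrest)

/-- a cover is determined by its label -/
lemma cov_label_inj {x z z' : Fin n → ℕ} (h : BruhatCov n x z) (h' : BruhatCov n x z')
    (hl : Flabel x z = Flabel x z') : z = z' := by
  obtain ⟨hx, _, i, j, hij, hv, rfl, _, hlab⟩ := cov_struct h
  obtain ⟨_, _, i', j', hij', hv', rfl, _, hlab'⟩ := cov_struct h'
  rw [hlab, hlab', Prod.mk.injEq] at hl
  have hi : i = i' := hx.2 hl.1
  have hj : j = j' := hx.2 hl.2
  rw [hi, hj]

lemma exists_cover_le {x y : Fin n → ℕ} (hlt : BruhatLt n x y) :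
    ∃ z, BruhatCov n x z ∧ BruhatLe n z y := by
  classical
  have hTne : {m | ∃ z, BruhatLt n x z ∧ BruhatLe n z y ∧ Mtot z = m}.Nonempty :=
    ⟨Mtot y, y, hlt, Relation.ReflTransGen.refl, rfl⟩
  obtain ⟨z, hz1, hz2, hz3⟩ := Nat.sInf_mem hTne
  refine ⟨z, ⟨hz1, ?_⟩, hz2⟩
  intro v hv1 hv2
  have hvT : Mtot v ∈ {m | ∃ z, BruhatLt n x z ∧ BruhatLe n z y ∧ Mtot z = m} :=
    ⟨v, hv1, hv2.1.trans hz2, rfl⟩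
  have h1 := Nat.sInf_le hvT
  have h2 := mtot_lt_of_bruhatLt hv2
  omega

lemma enc_lt {p q : ℕ × ℕ} (hb : p.2 ≤ n) (h : pairLt p q) :
    p.1 * (n + 1) + p.2 < q.1 * (n + 1) + q.2 := by
  rcases h with h | ⟨he, h⟩
  · have h2 : (p.1 + 1) * (n + 1) ≤ q.1 * (n + 1) := Nat.mul_le_mul_right _ (by omega)
    rw [add_mul, one_mul] at h2
    omega
  · rw [he]; omega

lemma exists_min_cover {x y : Fin n → ℕ} (hx : IsPerm n x) (hlt : BruhatLt n x y) :
    ∃ z, BruhatCov n x z ∧ BruhatLe n z y ∧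
      ∀ w, BruhatCov n x w → BruhatLe n w y → ¬ pairLt (Flabel x w) (Flabel x z) := by
  classical
  obtain ⟨z0, hz01, hz02⟩ := exists_cover_le hlt
  have hTne : {m | ∃ z, BruhatCov n x z ∧ BruhatLe n z y ∧
      (Flabel x z).1 * (n+1) + (Flabel x z).2 = m}.Nonempty :=
    ⟨_, z0, hz01, hz02, rfl⟩
  obtain ⟨z, hz1, hz2, hz3⟩ := Nat.sInf_mem hTne
  refine ⟨z, hz1, hz2, ?_⟩
  intro w hw1 hw2 hpl
  obtain ⟨_, _, p, q, hpq, hvpq, hweq, _, hlabw⟩ := cov_struct hw1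
  have hwb : (Flabel x w).2 ≤ n := by rw [hlabw]; exact perm_le_n hx q
  have henc := enc_lt (n := n) hwb hpl
  have hwT : (Flabel x w).1 * (n+1) + (Flabel x w).2 ∈ {m | ∃ z, BruhatCov n x z ∧
      BruhatLe n z y ∧ (Flabel x z).1 * (n+1) + (Flabel x z).2 = m} :=
    ⟨w, hw1, hw2, rfl⟩
  have := Nat.sInf_le hwT
  omega

lemma cover_in_window {x : Fin n → ℕ} (hx : IsPerm n x) {p q : Fin n} (hpq : p < q)
    (hv : x p < x q) :
    ∃ m : Fin n, p < m ∧ m ≤ q ∧ x p < x m ∧ x m ≤ x q ∧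
      (∀ k : Fin n, p < k → k ≤ q → x p < x k → x m ≤ x k) ∧
      BruhatCov n x (sw x p m) ∧ Flabel x (sw x p m) = (x p, x m) := by
  classical
  have hGne : ((univ : Finset (Fin n)).filter fun k => p < k ∧ k ≤ q ∧ x p < x k).Nonempty :=
    ⟨q, Finset.mem_filter.2 ⟨Finset.mem_univ q, hpq, le_rfl, hv⟩⟩
  obtain ⟨m, hmG, hmmin⟩ := Finset.exists_min_image _ x hGne
  obtain ⟨-, hm1, hm2, hm3⟩ := Finset.mem_filter.1 hmG
  have hmin : ∀ k : Fin n, p < k → k ≤ q → x p < x k → x m ≤ x k := by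
    intro k h1 h2 h3
    exact hmmin k (Finset.mem_filter.2 ⟨Finset.mem_univ k, h1, h2, h3⟩)
  have hni : ∀ k : Fin n, p.val < k.val → k.val < m.val → ¬(x p < x k ∧ x k < x m) := by
    intro k h1 h2 ⟨h3, h4⟩
    have hkq : k ≤ q := le_of_lt (lt_of_lt_of_le (show k < m from h2) hm2)
    have := hmin k h1 hkq h3
    omega
  exact ⟨m, hm1, hm2, hm3, hmmin q (Finset.mem_filter.2
    ⟨Finset.mem_univ q, hpq, le_rfl, hv⟩), hmin, cover_of_noint hx hm1 hm3 hni,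
    flabel_sw hx hm1 hm3⟩

lemma lemA {x z w : Fin n → ℕ} (hx : IsPerm n x) (h0 : BruhatCov n x z)
    (h1 : BruhatCov n z w) (hlt : pairLt (Flabel z w) (Flabel x z)) :
    ∃ v, BruhatCov n x v ∧ pairLt (Flabel x v) (Flabel x z) ∧ Dom v w := by
  obtain ⟨-, hz, i0, j0, hij0, hv0, hzeq, hni0, hlab0⟩ := cov_struct h0
  obtain ⟨-, hw, P, Q, hPQ, hvPQ, hweq, hniPQ, hlab1⟩ := cov_struct h1
  subst hzeq; subst hweq
  have hzi0 : sw x i0 j0 i0 = x j0 := sw_left x i0 j0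
  have hzj0 : sw x i0 j0 j0 = x i0 := sw_right x hij0.ne
  rw [hlab0, hlab1] at hlt
  have hlt' : sw x i0 j0 P < x i0 ∨ (sw x i0 j0 P = x i0 ∧ sw x i0 j0 Q < x j0) := hlt
  rcases hlt' with hc1 | ⟨hc1, hc2⟩
  · -- case a' < a
    have hPi0 : P ≠ i0 := by intro h; rw [h, hzi0] at hc1; omega
    have hPj0 : P ≠ j0 := by intro h; rw [h, hzj0] at hc1; omega
    have hxP : sw x i0 j0 P = x P := sw_other x hPi0 hPj0
    have hxPQ : x P < x Q := by
      by_cases hQi : Q = i0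
      · rw [hQi]; omega
      · by_cases hQj : Q = j0
        · rw [hQj]; omega
        · have : sw x i0 j0 Q = x Q := sw_other x hQi hQj
          omega
    obtain ⟨m, hm1, hm2, hm3, hm4, hmin, hcov, hlabv⟩ := cover_in_window hx hPQ hxPQ
    refine ⟨sw x P m, hcov, ?_, ?_⟩
    · rw [hlabv, hlab0]
      exact Or.inl (by omega)
    · intro k t
      have e1 := dcnt_sw hm1 hm3 k t
      have e2 := dcnt_sw hij0 hv0 k t
      have e3 := dcnt_sw hPQ hvPQ k t
      have hf1 : m.val ≤ Q.val := hm2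
      have hf2 : i0.val < j0.val := hij0
      have hf3 : P.val < m.val := hm1
      by_cases hQi : Q = i0
      · have hzQ : sw x i0 j0 Q = x j0 := by rw [hQi, hzi0]
        have hxQ : x Q = x i0 := by rw [hQi]
        split_ifs at e1 e2 e3 <;> omega
      · by_cases hQj : Q = j0
        · have hzQ : sw x i0 j0 Q = x i0 := by rw [hQj, hzj0]
          have hxQ : x Q = x j0 := by rw [hQj]
          have hQval : Q.val = j0.val := by rw [hQj]
          have hkey : i0.val ≤ P.val ∨ x m ≤ x i0 := by
            by_cases hc : P < i0
            · right
              exact hmin i0 hc (by rw [hQj] at hPQ ⊢; exact le_of_lt hij0) (by omega)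
            · left; exact not_lt.1 hc
          split_ifs at e1 e2 e3 <;> omega
        · have hzQ : sw x i0 j0 Q = x Q := sw_other x hQi hQj
          split_ifs at e1 e2 e3 <;> omega
  · -- case a' = a
    have hPj0 : P = j0 := hz.2 (by rw [hc1, ← hzj0])
    have hzP : sw x i0 j0 P = x i0 := by rw [hPj0, hzj0]
    have hPval : P.val = j0.val := by rw [hPj0]
    have hQi0 : Q ≠ i0 := fun h => by
      rw [hPj0] at hPQ
      rw [h] at hPQ
      exact absurd (hij0.trans hPQ) (lt_irrefl _)
    have hQj0 : Q ≠ j0 := fun h => by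
      rw [← hPj0] at h
      exact hPQ.ne' h
    have hzQ : sw x i0 j0 Q = x Q := sw_other x hQi0 hQj0
    have hio_q : i0 < Q := by
      rw [hPj0] at hPQ
      exact hij0.trans hPQ
    have hvXQ : x i0 < x Q := by omega
    obtain ⟨m, hm1, hm2, hm3, hm4, hmin, hcov, hlabv⟩ := cover_in_window hx hio_q hvXQ
    refine ⟨sw x i0 m, hcov, ?_, ?_⟩
    · rw [hlabv, hlab0]
      exact Or.inr ⟨rfl, by omega⟩
    · intro k t
      have e1 := dcnt_sw hm1 hm3 k t
      have e2 := dcnt_sw hij0 hv0 k t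
      have e3 := dcnt_sw hPQ hvPQ k t
      have hf1 : m.val ≤ Q.val := hm2
      have hf2 : i0.val < j0.val := hij0
      have hf3 : i0.val < m.val := hm1
      have hf4 : j0.val < Q.val := by omega
      split_ifs at e1 e2 e3 <;> omega

lemma lemB2 {x z0 z1 y : Fin n → ℕ} (hx : IsPerm n x)
    (h0 : BruhatCov n x z0) (h1 : BruhatCov n x z1)
    (hl : (Flabel x z0).1 = (Flabel x z1).1) (hb : (Flabel x z0).2 < (Flabel x z1).2)
    (hd0 : Dom z0 y) (hd1 : Dom z1 y) :
    ∃ w, BruhatCov n z1 w ∧ pairLt (Flabel z1 w) (Flabel x z1) ∧ Dom w y := by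
  obtain ⟨-, hz0, i0, j0, hij0, hv0, hz0eq, hni0, hlab0⟩ := cov_struct h0
  obtain ⟨-, hz1, i1, j1, hij1, hv1, hz1eq, hni1, hlab1⟩ := cov_struct h1
  rw [hlab0, hlab1] at hl hb
  simp only at hl hb
  have hi10 : i1 = i0 := hx.2 hl.symm
  subst hi10
  have hj10 : j1 < j0 := by
    rcases lt_trichotomy j1 j0 with h | h | h
    · exact h
    · rw [h] at hb; omega
    · exfalso
      have := hni1 j0 hij0 h
      exact this ⟨hv0, hb⟩
  subst hz0eq; subst hz1eq
  have hz1j1 : sw x i1 j1 j1 = x i1 := sw_right x hij1.ne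
  have hz1j0 : sw x i1 j1 j0 = x j0 := by
    refine sw_other x ?_ ?_
    · exact fun h => by rw [h] at hij0; exact absurd hij0 (lt_irrefl _)
    · exact hj10.ne'
  have hvz1 : sw x i1 j1 j1 < sw x i1 j1 j0 := by rw [hz1j1, hz1j0]; omega
  obtain ⟨m, hm1, hm2, hm3, hm4, hmin, hcov, hlabv⟩ :=
    cover_in_window (isPerm_sw hx i1 j1) hj10 hvz1
  refine ⟨_, hcov, ?_, ?_⟩
  · rw [hlabv, hlab1]
    rw [hz1j0] at hm4
    exact Or.inr ⟨hz1j1, by omega⟩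
  · intro k t
    have e1 := dcnt_sw hm1 hm3 k t
    have e2 := dcnt_sw hij1 hv1 k t
    have e3 := dcnt_sw hij0 hv0 k t
    have hdd0 := hd0 k t
    have hdd1 := hd1 k t
    rw [hz1j0] at hm4
    have hf1 : m.val ≤ j0.val := hm2
    have hf2 : i1.val < j1.val := hij1
    have hf3 : j1.val < m.val := hm1
    have hf4 : j1.val < j0.val := hj10
    have hf5 : i1.val < j0.val := hij0
    split_ifs at e1 e2 e3 <;> omega

lemma labels_cons (x z : Fin n → ℕ) (c : List (Fin n → ℕ)) :
    labels (x :: z :: c) = Flabel x z :: labels (z :: c) := rfl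

lemma labels_single (x : Fin n → ℕ) : labels [x] = [] := rfl

lemma pairLe_fst {p q : ℕ × ℕ} (h : pairLe p q) : p.1 ≤ q.1 := by
  rcases h with rfl | h
  · exact le_rfl
  · rcases h with h | ⟨h, _⟩
    · exact le_of_lt h
    · exact le_of_eq h

lemma chain_head_le {l0 : ℕ × ℕ} {L : List (ℕ × ℕ)} (h : List.Chain' pairLe (l0 :: L)) :
    ∀ μ ∈ L, pairLe l0 μ := by
  induction L generalizing l0 with
  | nil => intro μ hμ; simp at hμ
  | cons m L' ih =>
    rw [List.Chain', List.isChain_cons_cons] at h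
    intro μ hμ
    rcases List.mem_cons.1 hμ with rfl | hμ'
    · exact h.1
    · exact pairLe_trans h.1 (ih h.2 μ hμ')

lemma lexLe_head {μ ν : ℕ × ℕ} {L M : List (ℕ × ℕ)} (h : lexLe (μ :: L) (ν :: M)) :
    pairLe μ ν := by
  rcases h with h | h
  · injection h with h1 _
    exact Or.inl h1
  · cases h with
    | cons _ => exact Or.inl rfl
    | rel h' => exact Or.inr h'

lemma lexLe_cons (μ : ℕ × ℕ) {L M : List (ℕ × ℕ)} (h : lexLe L M) :
    lexLe (μ :: L) (μ :: M) := by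
  rcases h with rfl | h
  · exact Or.inl rfl
  · exact Or.inr (List.Lex.cons h)

lemma lexLe_of_lt {μ ν : ℕ × ℕ} {L M : List (ℕ × ℕ)} (h : pairLt μ ν) :
    lexLe (μ :: L) (ν :: M) := Or.inr (List.Lex.rel h)

lemma lexLe_nil (L : List (ℕ × ℕ)) : lexLe [] L := by
  cases L with
  | nil => exact Or.inl rfl
  | cons a l => exact Or.inr List.Lex.nil

lemma maxchain_cons {x z y : Fin n → ℕ} {c : List (Fin n → ℕ)} (hcov : BruhatCov n x z)
    (h : IsBruhatMaxChain n z y c) : IsBruhatMaxChain n x y (x :: c) := by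
  obtain ⟨hch, hhd, hlast⟩ := h
  cases c with
  | nil => simp at hhd
  | cons a l =>
    have ha : a = z := by simpa using hhd
    subst ha
    exact ⟨List.isChain_cons_cons.2 ⟨hcov, hch⟩, rfl, by rwa [List.getLast?_cons_cons]⟩

lemma maxchain_destruct {x y : Fin n → ℕ} {c : List (Fin n → ℕ)}
    (h : IsBruhatMaxChain n x y c) (hne : x ≠ y) :
    ∃ z c', c = x :: z :: c' ∧ BruhatCov n x z ∧ IsBruhatMaxChain n z y (z :: c') := by
  obtain ⟨hch, hhd, hlast⟩ := h
  cases c with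
  | nil => simp at hhd
  | cons a l =>
    have ha : a = x := by simpa using hhd
    subst ha
    cases l with
    | nil =>
      simp only [List.getLast?_singleton, Option.some.injEq] at hlast
      exact absurd hlast hne
    | cons b l' =>
      rw [List.Chain', List.isChain_cons_cons] at hch
      rw [List.getLast?_cons_cons] at hlast
      exact ⟨b, l', rfl, hch.1, hch.2, rfl, hlast⟩

lemma maxchain_le {y : Fin n → ℕ} {c : List (Fin n → ℕ)} :
    ∀ {x : Fin n → ℕ}, IsBruhatMaxChain n x y c → BruhatLe n x y := by
  induction c with
  | nil => intro x h; simp [IsBruhatMaxChain] at h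
  | cons a l ih =>
    intro x h
    obtain ⟨hch, hhd, hlast⟩ := h
    have ha : a = x := by simpa using hhd
    subst ha
    cases l with
    | nil =>
      simp only [List.getLast?_singleton, Option.some.injEq] at hlast
      exact hlast ▸ Relation.ReflTransGen.refl
    | cons b l' =>
      rw [List.Chain', List.isChain_cons_cons] at hch
      rw [List.getLast?_cons_cons] at hlast
      exact (hch.1.1.1).trans (ih ⟨hch.2, rfl, hlast⟩)

lemma const_dcnt : ∀ (c : List (Fin n → ℕ)) (u v : Fin n → ℕ), c.Chain' (BruhatCov n) →
    c.head? = some u → c.getLast? = some v → ∀ k t, (∀ μ ∈ labels c, t ≤ μ.1) →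
    dcnt u k t = dcnt v k t := by
  intro c
  induction c with
  | nil => intro u v _ hhd _; simp at hhd
  | cons a l ih =>
    intro u v hch hhd hlast k t hall
    have ha : a = u := by simpa using hhd
    subst ha
    cases l with
    | nil =>
      simp only [List.getLast?_singleton, Option.some.injEq] at hlast
      rw [hlast]
    | cons b l' =>
      rw [List.Chain', List.isChain_cons_cons] at hch
      rw [List.getLast?_cons_cons] at hlast
      obtain ⟨-, -, i, j, hij, hv, hbeq, -, hlab⟩ := cov_struct hch.1
      have hmem : Flabel a b ∈ labels (a :: b :: l') := by
        rw [labels_cons]; exact List.mem_cons_self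
      have hti : t ≤ a i := by
        have := hall _ hmem
        rw [hlab] at this
        exact this
      have hub : dcnt b k t = dcnt a k t := by
        rw [hbeq, dcnt_sw hij hv]
        rw [if_neg (by omega)]
        omega
      rw [← hub]
      refine ih b v hch.2 rfl hlast k t ?_
      intro μ hμ
      exact hall μ (by rw [labels_cons]; exact List.mem_cons_of_mem _ hμ)

lemma exists_maxchain {y : Fin n → ℕ} (hy : IsPerm n y) :
    ∀ (M : ℕ) (u : Fin n → ℕ), IsPerm n u → BruhatLe n u y → Mtot y ≤ M + Mtot u →
    ∃ c, IsBruhatMaxChain n u y c := by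
  intro M
  induction M with
  | zero =>
    intro u hu hle hM
    have huy : u = y := by
      by_contra hne
      have := mtot_lt_of_bruhatLt ⟨hle, hne⟩
      omega
    subst huy
    exact ⟨[u], List.isChain_singleton u, rfl, rfl⟩
  | succ M ihM =>
    intro u hu hle hM
    by_cases huy : u = y
    · subst huy
      exact ⟨[u], List.isChain_singleton u, rfl, rfl⟩
    · obtain ⟨z, hzcov, hzle⟩ := exists_cover_le ⟨hle, huy⟩
      have hzperm := (cov_struct hzcov).2.1
      have hzlt := mtot_lt_of_bruhatLt hzcov.1
      obtain ⟨c, hc⟩ := ihM z hzperm hzle (by omega)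
      exact ⟨u :: c, maxchain_cons hzcov hc⟩

lemma base_case {x : Fin n → ℕ} (hx : IsPerm n x) :
    ∃ c, (IsBruhatMaxChain n x x c ∧ (labels c).Chain' pairLe) ∧
      (∀ d, IsBruhatMaxChain n x x d ∧ (labels d).Chain' pairLe → d = c) ∧
      (∀ d, IsBruhatMaxChain n x x d → lexLe (labels c) (labels d)) := by
  refine ⟨[x], ⟨⟨List.isChain_singleton x, rfl, rfl⟩, by rw [labels_single]; exact List.isChain_nil⟩,
    ?_, ?_⟩
  · rintro d ⟨hdmax, -⟩
    obtain ⟨hch, hhd, hlast⟩ := hdmax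
    cases d with
    | nil => simp at hhd
    | cons a l =>
      have ha : a = x := by simpa using hhd
      subst ha
      cases l with
      | nil => rfl
      | cons b l' =>
        exfalso
        rw [List.Chain', List.isChain_cons_cons] at hch
        rw [List.getLast?_cons_cons] at hlast
        have hble : BruhatLe n b a := maxchain_le ⟨hch.2, rfl, hlast⟩
        have hxb : BruhatLt n a b := hch.1.1
        exact hxb.2 (bruhat_antisymm hxb.1 hble)
  · intro d _
    rw [labels_single]
    exact lexLe_nil _


lemma main_aux {y : Fin n → ℕ} (hy : IsPerm n y) :
    ∀ (N : ℕ) (x : Fin n → ℕ), IsPerm n x → BruhatLe n x y → Mtot y ≤ N + Mtot x →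
    ∃ c, (IsBruhatMaxChain n x y c ∧ (labels c).Chain' pairLe) ∧
      (∀ d, IsBruhatMaxChain n x y d ∧ (labels d).Chain' pairLe → d = c) ∧
      (∀ d, IsBruhatMaxChain n x y d → lexLe (labels c) (labels d)) := by
  intro N
  induction N with
  | zero =>
    intro x hx hle hN
    have hxy : x = y := by
      by_contra hne
      have := mtot_lt_of_bruhatLt ⟨hle, hne⟩
      omega
    subst hxy
    exact base_case hx
  | succ N IH =>
    intro x hx hle hN
    by_cases hxy : x = y
    · subst hxy; exact base_case hx
    obtain ⟨z0, hz0cov, hz0le, hz0min⟩ := exists_min_cover hx ⟨hle, hxy⟩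
    have hz0perm := (cov_struct hz0cov).2.1
    have hz0Mlt : Mtot x < Mtot z0 := mtot_lt_of_bruhatLt hz0cov.1
    have hz0dom : Dom z0 y := dom_of_le hz0le
    obtain ⟨c', ⟨hc'max, hc'inc⟩, hc'uniq, hc'lex⟩ := IH z0 hz0perm hz0le (by omega)
    have hc'head : c'.head? = some z0 := hc'max.2.1
    obtain ⟨rest, hrest⟩ : ∃ rest, c' = z0 :: rest := by
      cases c' with
      | nil => simp at hc'head
      | cons a l =>
        have ha : a = z0 := by simpa using hc'head
        exact ⟨l, by rw [ha]⟩
    have hlabc : labels (x :: c') = Flabel x z0 :: labels c' := by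
      rw [hrest]; rfl
    have hlt_label : ∀ z1, BruhatCov n x z1 → BruhatLe n z1 y → z1 ≠ z0 →
        pairLt (Flabel x z0) (Flabel x z1) := by
      intro z1 hcov hle1 hne1
      have hnl := hz0min z1 hcov hle1
      rcases pairLe_of_not_lt hnl with heq | hlt
      · exact absurd (cov_label_inj hz0cov hcov heq).symm hne1
      · exact hlt
    refine ⟨x :: c', ⟨maxchain_cons hz0cov hc'max, ?_⟩, ?_, ?_⟩
    · -- the constructed chain is increasing
      rw [hlabc]
      cases rest with
      | nil =>
        rw [hrest, labels_single]
        exact List.isChain_singleton _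
      | cons w rest' =>
        have hlabc' : labels c' = Flabel z0 w :: labels (w :: rest') := by rw [hrest]; rfl
        have hch' := hc'max.1
        rw [hrest, List.Chain', List.isChain_cons_cons] at hch'
        have hcovz0w : BruhatCov n z0 w := hch'.1
        have hlast' := hc'max.2.2
        rw [hrest, List.getLast?_cons_cons] at hlast'
        have hwley : BruhatLe n w y := maxchain_le ⟨hch'.2, rfl, hlast'⟩
        have hnl : ¬ pairLt (Flabel z0 w) (Flabel x z0) := by
          intro hplt
          obtain ⟨v, hvcov, hvlt, hvdom⟩ := lemA hx hz0cov hcovz0w hplt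
          have hvperm := (cov_struct hvcov).2.1
          have hvley : BruhatLe n v y :=
            le_of_dom hvperm hy (dom_trans hvdom (dom_of_le hwley))
          exact hz0min v hvcov hvley hvlt
        rw [hlabc', List.Chain', List.isChain_cons_cons]
        refine ⟨pairLe_of_not_lt hnl, ?_⟩
        rw [← hlabc']
        exact hc'inc
    · -- uniqueness of the increasing chain
      rintro d ⟨hdmax, hdinc⟩
      obtain ⟨z1, d', hdeq, hcovxz1, hd1max⟩ := maxchain_destruct hdmax hxy
      have hz1le : BruhatLe n z1 y := maxchain_le hd1max
      have hlabd : labels d = Flabel x z1 :: labels (z1 :: d') := by rw [hdeq]; rfl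
      have hd1inc : (labels (z1 :: d')).Chain' pairLe := by
        have h2 := hdinc
        rw [hlabd] at h2
        exact h2.tail
      by_cases hz10 : z1 = z0
      · subst hz10
        have huniq := hc'uniq (z1 :: d') ⟨hd1max, hd1inc⟩
        rw [hdeq, huniq]
      · exfalso
        have hlt01 := hlt_label z1 hcovxz1 hz1le hz10
        have hlt01' : (Flabel x z0).1 < (Flabel x z1).1 ∨
            ((Flabel x z0).1 = (Flabel x z1).1 ∧ (Flabel x z0).2 < (Flabel x z1).2) := hlt01
        rcases hlt01' with hA | ⟨hE, hB⟩
        · -- case (i) : small values never move in d, contradiction with z0 ≤ y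
          obtain ⟨-, -, i0, j0, hij0, hv0, hz0eq, -, hlab0⟩ := cov_struct hz0cov
          have hxa : (Flabel x z0).1 = x i0 := by rw [hlab0]
          have hxb : (Flabel x z0).2 = x j0 := by rw [hlab0]
          have hall : ∀ μ ∈ labels d, (Flabel x z0).1 + 1 ≤ μ.1 := by
            intro μ hμ
            rw [hlabd] at hμ
            rcases List.mem_cons.1 hμ with rfl | hμ'
            · omega
            · have h2 := hdinc
              rw [hlabd] at h2
              have h3 := pairLe_fst (chain_head_le h2 μ hμ')
              omega
          have hconst := const_dcnt d x y hdmax.1 hdmax.2.1 hdmax.2.2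
            (i0.val + 1) ((Flabel x z0).1 + 1) hall
          have hijval : i0.val < j0.val := hij0
          have hbump := dcnt_sw hij0 hv0 (i0.val + 1) ((Flabel x z0).1 + 1)
          rw [← hz0eq] at hbump
          rw [if_pos ⟨by omega, by omega, by omega, by omega⟩] at hbump
          have hdomy := hz0dom (i0.val + 1) ((Flabel x z0).1 + 1)
          omega
        · -- case (ii)
          have hz1ney : z1 ≠ y := by
            intro hz1y
            have hz0ney : z0 ≠ z1 := fun h => hz10 h.symm
            refine hcovxz1.2 z0 hz0cov.1 ⟨?_, hz0ney⟩
            rw [hz1y]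
            exact hz0le
          obtain ⟨w, hwcov, hwlab, hwdom⟩ :=
            lemB2 hx hz0cov hcovxz1 hE hB hz0dom (dom_of_le hz1le)
          have hwperm := (cov_struct hwcov).2.1
          have hwley : BruhatLe n w y := le_of_dom hwperm hy hwdom
          have hz1perm := (cov_struct hcovxz1).2.1
          have hz1Mlt : Mtot x < Mtot z1 := mtot_lt_of_bruhatLt hcovxz1.1
          obtain ⟨e, hemax⟩ := exists_maxchain hy (Mtot y) w hwperm hwley (by omega)
          have hfmax : IsBruhatMaxChain n z1 y (z1 :: e) := maxchain_cons hwcov hemax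
          obtain ⟨c1, ⟨hc1max, hc1inc⟩, hc1uniq, hc1lex⟩ :=
            IH z1 hz1perm hz1le (by omega)
          have hd1c1 : (z1 :: d') = c1 := hc1uniq _ ⟨hd1max, hd1inc⟩
          have hlex := hc1lex (z1 :: e) hfmax
          rw [← hd1c1] at hlex
          obtain ⟨er, her⟩ : ∃ er, e = w :: er := by
            have hh := hemax.2.1
            cases e with
            | nil => simp at hh
            | cons a l =>
              have ha : a = w := by simpa using hh
              exact ⟨l, by rw [ha]⟩
          have hlabze : labels (z1 :: e) = Flabel z1 w :: labels e := by rw [her]; rfl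
          obtain ⟨w', d'', hd''eq, hcovz1w', hd''max⟩ := maxchain_destruct hd1max hz1ney
          have hlabzd : labels (z1 :: d') = Flabel z1 w' :: labels (w' :: d'') := by
            rw [hd''eq]; rfl
          rw [hlabzd, hlabze] at hlex
          have hle1 : pairLe (Flabel z1 w') (Flabel z1 w) := lexLe_head hlex
          have hlt2 : pairLt (Flabel z1 w') (Flabel x z1) := pairLe_lt_trans hle1 hwlab
          have h2 := hdinc
          rw [hlabd, hlabzd, List.Chain', List.isChain_cons_cons] at h2
          exact not_pairLe_of_lt hlt2 h2.1
    · -- lexicographic minimality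
      intro d hdmax
      obtain ⟨z1, d', hdeq, hcovxz1, hd1max⟩ := maxchain_destruct hdmax hxy
      have hz1le : BruhatLe n z1 y := maxchain_le hd1max
      have hlabd : labels d = Flabel x z1 :: labels (z1 :: d') := by rw [hdeq]; rfl
      rw [hlabd]
      show lexLe (labels (x :: c')) _
      rw [hlabc]
      by_cases hz10 : z1 = z0
      · subst hz10
        exact lexLe_cons _ (hc'lex _ hd1max)
      · exact lexLe_of_lt (hlt_label z1 hcovxz1 hz1le hz10)

end Edelman

theorem edelman_EL_labeling (n : ℕ) (x y : Fin n → ℕ)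
    (hx : IsPerm n x) (hy : IsPerm n y) (hle : BruhatLe n x y) :
    ∃ c : List (Fin n → ℕ),
      (IsBruhatMaxChain n x y c ∧ (labels c).Chain' pairLe) ∧
      (∀ d, IsBruhatMaxChain n x y d ∧ (labels d).Chain' pairLe → d = c) ∧
      (∀ d, IsBruhatMaxChain n x y d → lexLe (labels c) (labels d)) := by
  exact Edelman.main_aux hy (Edelman.Mtot y) x hx hle (by omega)
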